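/- Let f₀ be a convex integrable density on [0,∞) that is linear on [x₀ − 2δ, x₀] for some δ > 0 and x₀ > 2δ, with distribution function F₀. Let g be a nonnegative convex integrable function on [0,∞) with G(t) = ∫₀ᵗ g, and suppose c := g(x₀) − f₀(x₀) < 0. Then 2·sup_{t ≥ 0} |G(t) − F₀(t)| ≥ |c| δ / 4. -/

import Mathlib

open Set MeasureTheory

set_option maxHeartbeats 1000000 in
theorem stmt_18 (δ x₀ : ℝ) (hδ : 0 < δ) (hx₀ : 2 * δ < x₀)
    (f₀ : ℝ → ℝ) (hf₀_nonneg : ∀ t ∈ Ici (0 : ℝ), 0 ≤ f₀ t)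
    (hf₀_conv : ConvexOn ℝ (Ici (0 : ℝ)) f₀)
    (hf₀_int : IntegrableOn f₀ (Ici (0 : ℝ)))
    (hf₀_one : ∫ t in Ici (0 : ℝ), f₀ t = 1)
    (hf₀_lin : ∃ p q : ℝ, ∀ t ∈ Icc (x₀ - 2 * δ) x₀, f₀ t = p * t + q)
    (g : ℝ → ℝ) (hg_nonneg : ∀ t ∈ Ici (0 : ℝ), 0 ≤ g t)
    (hg_conv : ConvexOn ℝ (Ici (0 : ℝ)) g)
    (hg_int : IntegrableOn g (Ici (0 : ℝ)))
    (G F₀ : ℝ → ℝ)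
    (hG : ∀ t, G t = ∫ s in (0 : ℝ)..t, g s)
    (hF₀ : ∀ t, F₀ t = ∫ s in (0 : ℝ)..t, f₀ s)
    (c : ℝ) (hcdef : c = g x₀ - f₀ x₀) (hc : c < 0) :
    |c| * δ / 4 ≤ 2 * ⨆ t : Ici (0 : ℝ), |G t - F₀ t| := by
  obtain ⟨p, q, hpq⟩ := hf₀_lin
  set a := x₀ - 2 * δ with hadef
  set b := x₀ - δ with hbdef
  have ha0 : (0:ℝ) ≤ a := by rw [hadef]; linarith
  have hb0 : (0:ℝ) ≤ b := by rw [hbdef]; linarith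
  have hx0 : (0:ℝ) ≤ x₀ := by linarith
  have hab : a ≤ b := by rw [hadef, hbdef]; linarith
  have hbx : b ≤ x₀ := by rw [hbdef]; linarith
  have hax : a ≤ x₀ := le_trans hab hbx
  -- interval integrability of g and f₀ on subintervals of [0,∞)
  have intg : ∀ u v : ℝ, 0 ≤ u → u ≤ v → IntervalIntegrable g volume u v := by
    intro u v hu huv
    apply IntegrableOn.intervalIntegrable
    apply hg_int.mono_set
    rw [Set.uIcc_of_le huv]
    exact fun x hx => le_trans hu hx.1
  have intf : ∀ u v : ℝ, 0 ≤ u → u ≤ v → IntervalIntegrable f₀ volume u v := by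
    intro u v hu huv
    apply IntegrableOn.intervalIntegrable
    apply hf₀_int.mono_set
    rw [Set.uIcc_of_le huv]
    exact fun x hx => le_trans hu hx.1
  -- boundedness of |G - F₀|
  have hgae : 0 ≤ᵐ[volume.restrict (Ici (0:ℝ))] g :=
    (ae_restrict_iff' measurableSet_Ici).2 (ae_of_all _ hg_nonneg)
  have hfae : 0 ≤ᵐ[volume.restrict (Ici (0:ℝ))] f₀ :=
    (ae_restrict_iff' measurableSet_Ici).2 (ae_of_all _ hf₀_nonneg)
  have hCg0 : (0:ℝ) ≤ ∫ s in Ici (0:ℝ), g s :=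
    setIntegral_nonneg measurableSet_Ici hg_nonneg
  have hbound : ∀ t : ℝ, 0 ≤ t → |G t - F₀ t| ≤ (∫ s in Ici (0:ℝ), g s) + 1 := by
    intro t ht
    have hsub : Ioc (0:ℝ) t ≤ᵐ[volume] Ici (0:ℝ) :=
      HasSubset.Subset.eventuallyLE (fun x hx => le_of_lt hx.1)
    have hG1 : G t = ∫ s in Ioc (0:ℝ) t, g s := by
      rw [hG, intervalIntegral.integral_of_le ht]
    have hF1 : F₀ t = ∫ s in Ioc (0:ℝ) t, f₀ s := by
      rw [hF₀, intervalIntegral.integral_of_le ht]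
    have h1 : (0:ℝ) ≤ G t := by
      rw [hG1]
      exact setIntegral_nonneg measurableSet_Ioc (fun x hx => hg_nonneg x (le_of_lt hx.1))
    have h2 : G t ≤ ∫ s in Ici (0:ℝ), g s := by
      rw [hG1]; exact setIntegral_mono_set hg_int hgae hsub
    have h3 : (0:ℝ) ≤ F₀ t := by
      rw [hF1]
      exact setIntegral_nonneg measurableSet_Ioc (fun x hx => hf₀_nonneg x (le_of_lt hx.1))
    have h4 : F₀ t ≤ 1 := by
      rw [hF1, ← hf₀_one]; exact setIntegral_mono_set hf₀_int hfae hsub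
    rw [abs_le]
    constructor <;> linarith
  have hbdd : BddAbove (Set.range fun t : Ici (0:ℝ) => |G t - F₀ t|) := by
    refine ⟨(∫ s in Ici (0:ℝ), g s) + 1, ?_⟩
    rintro y ⟨t, rfl⟩
    exact hbound t t.2
  have hM : ∀ t : ℝ, (ht : 0 ≤ t) → |G t - F₀ t| ≤ ⨆ t : Ici (0:ℝ), |G t - F₀ t| := by
    intro t ht
    exact le_ciSup hbdd ⟨t, ht⟩
  -- reduce to finding a jump
  suffices h : ∃ u v : ℝ, 0 ≤ u ∧ u ≤ v ∧ |c| * δ / 4 ≤ |(G v - F₀ v) - (G u - F₀ u)| by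
    obtain ⟨u, v, hu, huv, hle⟩ := h
    have h1 := hM u hu
    have h2 := hM v (le_trans hu huv)
    have h3 : |(G v - F₀ v) - (G u - F₀ u)| ≤ |G v - F₀ v| + |G u - F₀ u| :=
      abs_sub _ _
    linarith
  -- the difference G - F₀ over an interval is an interval integral
  have hdiff : ∀ u v : ℝ, 0 ≤ u → u ≤ v →
      (G v - F₀ v) - (G u - F₀ u) = ∫ t in u..v, (g t - f₀ t) := by
    intro u v hu huv
    have hv : (0:ℝ) ≤ v := le_trans hu huv
    rw [hG, hG, hF₀, hF₀,
      intervalIntegral.integral_sub (intg u v hu huv) (intf u v hu huv)]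
    have e1 : (∫ s in (0:ℝ)..v, g s) - ∫ s in (0:ℝ)..u, g s = ∫ s in u..v, g s :=
      intervalIntegral.integral_interval_sub_left (intg 0 v le_rfl hv) (intg 0 u le_rfl hu)
    have e2 : (∫ s in (0:ℝ)..v, f₀ s) - ∫ s in (0:ℝ)..u, f₀ s = ∫ s in u..v, f₀ s :=
      intervalIntegral.integral_interval_sub_left (intf 0 v le_rfl hv) (intf 0 u le_rfl hu)
    linarith
  have habs : |c| = -c := abs_of_neg hc
  rcases le_or_gt (g b - f₀ b) (-c/2) with hcase | hcase
  · -- Case A : chord bound on [b, x₀]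
    refine ⟨b, x₀, hb0, hbx, ?_⟩
    set A := g b - f₀ b with hA
    set m := (c - A) / δ with hm
    set k := A - b * m with hk
    have key : ∀ t ∈ Icc b x₀, g t - f₀ t ≤ m * t + k := by
      intro t ht
      set l := (t - b) / δ with hl
      have hl0 : 0 ≤ l := div_nonneg (by linarith [ht.1]) hδ.le
      have hl1 : l ≤ 1 := by
        rw [hl, div_le_one hδ]
        have := ht.2
        rw [hbdef] at *
        linarith
      have hlδ : l * δ = t - b := by rw [hl]; field_simp
      have hcomb : (1 - l) * b + l * x₀ = t := by
        have hbx' : x₀ - b = δ := by rw [hbdef]; ring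
        nlinarith [hlδ, hbx']
      have hconv := hg_conv.2 (show b ∈ Ici (0:ℝ) from hb0) (show x₀ ∈ Ici (0:ℝ) from hx0)
        (by linarith : (0:ℝ) ≤ 1 - l) hl0 (by ring)
      rw [smul_eq_mul, smul_eq_mul, smul_eq_mul, smul_eq_mul, hcomb] at hconv
      -- hconv : g t ≤ (1 - l) * g b + l * g x₀
      have hft : f₀ t = p * t + q := hpq t ⟨le_trans hab ht.1, ht.2⟩
      have hfb : f₀ b = p * b + q := hpq b ⟨hab, hbx⟩
      have hfx : f₀ x₀ = p * x₀ + q := hpq x₀ ⟨hax, le_refl _⟩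
      rw [← mul_le_mul_iff_right₀ hδ]
      have e1 : δ * (m * t + k) = (x₀ - t) * (g b - f₀ b) + (t - b) * c := by
        rw [hk, hm, hA, hbdef]; field_simp; ring
      rw [e1]
      have e2 : δ * f₀ t = (x₀ - t) * f₀ b + (t - b) * f₀ x₀ := by
        rw [hft, hfb, hfx, hbdef]; ring
      have e3 : δ * g t ≤ (x₀ - t) * g b + (t - b) * g x₀ := by
        have h5 := mul_le_mul_of_nonneg_left hconv hδ.le
        have e4 : δ * ((1 - l) * g b + l * g x₀) = (δ - (t - b)) * g b + (t - b) * g x₀ := by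
          rw [hl]; field_simp
        have e5 : δ - (t - b) = x₀ - t := by rw [hbdef]; ring
        rw [e4, e5] at h5
        exact h5
      have e6 : (t - b) * c = (t - b) * g x₀ - (t - b) * f₀ x₀ := by rw [hcdef]; ring
      nlinarith [e2, e3, e6]
    have hIB : (∫ t in b..x₀, (m * t + k)) = δ * (A + c) / 2 := by
      rw [intervalIntegral.integral_add
          ((by fun_prop : Continuous fun t : ℝ => m * t).intervalIntegrable _ _)
          intervalIntegrable_const,
        intervalIntegral.integral_const_mul, integral_id,
        intervalIntegral.integral_const, smul_eq_mul, hk, hm, hbdef]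
      field_simp
      ring
    have hmono := intervalIntegral.integral_mono_on hbx
      ((intg b x₀ hb0 hbx).sub (intf b x₀ hb0 hbx))
      ((by fun_prop : Continuous fun t : ℝ => m * t + k).intervalIntegrable _ _)
      key
    rw [hIB] at hmono
    have hval : (G x₀ - F₀ x₀) - (G b - F₀ b) ≤ δ * (A + c) / 2 := by
      rw [hdiff b x₀ hb0 hbx]; exact hmono
    have : |c| * δ / 4 ≤ -((G x₀ - F₀ x₀) - (G b - F₀ b)) := by
      rw [habs]
      nlinarith [hval, hcase]
    exact le_trans this (neg_le_abs _)
  · -- Case B : lower bound on [a, b]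
    refine ⟨a, b, ha0, hab, ?_⟩
    have key : ∀ t ∈ Icc a b, -c/2 ≤ g t - f₀ t := by
      intro t ht
      have hxt : (0:ℝ) < x₀ - t := by
        have := ht.2; rw [hbdef] at this; linarith
      set l := (b - t) / (x₀ - t) with hl
      have hl0 : 0 ≤ l := div_nonneg (by linarith [ht.2]) hxt.le
      have hl1 : l ≤ 1 := by
        rw [hl, div_le_one hxt]
        rw [hbdef]; linarith
      have hlx : l * (x₀ - t) = b - t := by rw [hl]; field_simp
      have hcomb : (1 - l) * t + l * x₀ = b := by nlinarith [hlx]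
      have ht0 : (0:ℝ) ≤ t := le_trans ha0 ht.1
      have hconv := hg_conv.2 (show t ∈ Ici (0:ℝ) from ht0) (show x₀ ∈ Ici (0:ℝ) from hx0)
        (by linarith : (0:ℝ) ≤ 1 - l) hl0 (by ring)
      rw [smul_eq_mul, smul_eq_mul, smul_eq_mul, smul_eq_mul, hcomb] at hconv
      -- hconv : g b ≤ (1 - l) * g t + l * g x₀
      have hft : f₀ t = p * t + q := hpq t ⟨ht.1, le_trans ht.2 hbx⟩
      have hfb : f₀ b = p * b + q := hpq b ⟨hab, hbx⟩
      have hfx : f₀ x₀ = p * x₀ + q := hpq x₀ ⟨hax, le_refl _⟩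
      -- multiply hconv by (x₀ - t)
      have e3 : (x₀ - t) * g b ≤ δ * g t + (b - t) * g x₀ := by
        have h5 := mul_le_mul_of_nonneg_left hconv hxt.le
        have e4 : (x₀ - t) * ((1 - l) * g t + l * g x₀)
            = ((x₀ - t) - (b - t)) * g t + (b - t) * g x₀ := by
          rw [hl]; field_simp
        have e5 : (x₀ - t) - (b - t) = δ := by rw [hbdef]; ring
        rw [e4, e5] at h5
        exact h5
      have e2 : (x₀ - t) * f₀ b = δ * f₀ t + (b - t) * f₀ x₀ := by
        rw [hft, hfb, hfx, hbdef]; ring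
      have e6 : (b - t) * c = (b - t) * g x₀ - (b - t) * f₀ x₀ := by rw [hcdef]; ring
      have h5 : (x₀ - t) * (-c/2) ≤ (x₀ - t) * (g b - f₀ b) :=
        mul_le_mul_of_nonneg_left hcase.le hxt.le
      have h6 : 0 ≤ (-c) * ((x₀ - t - δ)/2 + (b - t)) := by
        apply mul_nonneg (by linarith)
        have h7 : t ≤ b := ht.2
        have h8 : δ ≤ x₀ - t := by rw [hbdef] at h7; linarith
        linarith
      rw [← mul_le_mul_iff_right₀ hδ]
      nlinarith [e2, e3, e6, h5, h6]
    have hmono := intervalIntegral.integral_mono_on hab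
      intervalIntegrable_const
      ((intg a b ha0 hab).sub (intf a b ha0 hab))
      key
    rw [intervalIntegral.integral_const, smul_eq_mul] at hmono
    have hba : b - a = δ := by rw [hadef, hbdef]; ring
    have hval : δ * (-c/2) ≤ (G b - F₀ b) - (G a - F₀ a) := by
      rw [hdiff a b ha0 hab, ← hba]
      exact hmono
    have : |c| * δ / 4 ≤ (G b - F₀ b) - (G a - F₀ a) := by
      rw [habs]; nlinarith [hval]
    exact le_trans this (le_abs_self _)
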